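/- Let X_1, ..., X_n (n ≥ 2) be i.i.d. random variables taking values in [0,1], with mean μ and variance σ². Then E[min{X_1, ..., X_n}] ≤ μ − σ². In particular, σ² ≤ μ. -/

import Mathlib

open MeasureTheory ProbabilityTheory

/-- If `X 0, ..., X (n-1)` (`n ≥ 2`) are i.i.d. random variables with values in `[0,1]`,
mean `μ`, and variance `σ²`, then `E[min X_i] ≤ μ - σ²`; in particular `σ² ≤ μ`. -/
theorem expected_min_le_mean_sub_variance (n : ℕ) (hn : 2 ≤ n)
    {Ω : Type*} [MeasurableSpace Ω] (P : Measure Ω) [IsProbabilityMeasure P]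
    (X : Fin n → Ω → ℝ) (hmeas : ∀ i, Measurable (X i))
    (hrange : ∀ i ω, X i ω ∈ Set.Icc (0 : ℝ) 1)
    (hindep : iIndepFun X P)
    (hident : ∀ i, Measure.map (X i) P = Measure.map (X ⟨0, by omega⟩) P)
    (μ σ2 : ℝ)
    (hμ : μ = ∫ ω, X ⟨0, by omega⟩ ω ∂P)
    (hσ2 : σ2 = variance (X ⟨0, by omega⟩) P) :
    (∫ ω, Finset.univ.inf' (Finset.univ_nonempty_iff.mpr ⟨⟨0, by omega⟩⟩)
        (fun i => X i ω) ∂P) ≤ μ - σ2 ∧ σ2 ≤ μ := by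
  set i0 : Fin n := ⟨0, by omega⟩
  set i1 : Fin n := ⟨1, by omega⟩
  set Y0 := X i0
  set Y1 := X i1
  -- integrability of bounded functions
  have hint : ∀ (f : Ω → ℝ), Measurable f → (∀ ω, |f ω| ≤ 1) → Integrable f P := by
    intro f hf hb
    exact (integrable_const (1 : ℝ)).mono' hf.aestronglyMeasurable
      (Filter.Eventually.of_forall fun ω => by simpa using hb ω)
  have hXb : ∀ i ω, |X i ω| ≤ 1 := fun i ω => by
    have h := hrange i ω; rw [abs_le]; constructor <;> [linarith [h.1]; exact h.2]
  have hintX : ∀ i, Integrable (X i) P := fun i => hint _ (hmeas i) (hXb i)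
  -- identical distribution consequences
  have hEY1 : ∫ ω, Y1 ω ∂P = ∫ ω, Y0 ω ∂P := by
    have h0 : ∫ ω, Y0 ω ∂P = ∫ x, x ∂(Measure.map Y0 P) :=
      (integral_map (hmeas i0).aemeasurable aestronglyMeasurable_id).symm
    have h1 : ∫ ω, Y1 ω ∂P = ∫ x, x ∂(Measure.map Y1 P) :=
      (integral_map (hmeas i1).aemeasurable aestronglyMeasurable_id).symm
    rw [h0, h1, hident i1]
  have hEY1sq : ∫ ω, (Y1 ω) ^ 2 ∂P = ∫ ω, (Y0 ω) ^ 2 ∂P := by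
    have h0 : ∫ ω, (Y0 ω) ^ 2 ∂P = ∫ x, x ^ 2 ∂(Measure.map Y0 P) :=
      (integral_map (hmeas i0).aemeasurable
        (measurable_id.pow_const 2).aestronglyMeasurable).symm
    have h1 : ∫ ω, (Y1 ω) ^ 2 ∂P = ∫ x, x ^ 2 ∂(Measure.map Y1 P) :=
      (integral_map (hmeas i1).aemeasurable
        (measurable_id.pow_const 2).aestronglyMeasurable).symm
    rw [h0, h1, hident i1]
  -- independence of Y0 and Y1
  have hIndep01 : IndepFun Y0 Y1 P := hindep.indepFun (by simp [i0, i1, Fin.ext_iff])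
  have hEmul : ∫ ω, Y0 ω * Y1 ω ∂P = (∫ ω, Y0 ω ∂P) * ∫ ω, Y1 ω ∂P :=
    hIndep01.integral_mul_eq_mul_integral (hintX i0).1 (hintX i1).1
  -- variance formula
  have hmem : MemLp Y0 2 P :=
    memLp_top_of_bound (hmeas i0).aestronglyMeasurable 1
      (Filter.Eventually.of_forall fun ω => by simpa using hXb i0 ω)
      |>.mono_exponent le_top
  have hvar : σ2 = (∫ ω, (Y0 ω) ^ 2 ∂P) - μ ^ 2 := by
    rw [hσ2, variance_eq_sub hmem, hμ]; rfl
  -- E[(Y0-Y1)^2] = 2 σ2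
  have hintsq : ∀ i, Integrable (fun ω => (X i ω) ^ 2) P := fun i =>
    hint _ ((hmeas i).pow_const 2) fun ω => by
      rw [abs_pow]; exact pow_le_one₀ (abs_nonneg _) (hXb i ω)
  have hintmul : Integrable (fun ω => Y0 ω * Y1 ω) P :=
    hint _ ((hmeas i0).mul (hmeas i1)) fun ω => by
      rw [abs_mul]
      calc |Y0 ω| * |Y1 ω| ≤ 1 * 1 := by
            exact mul_le_mul (hXb i0 ω) (hXb i1 ω) (abs_nonneg _) zero_le_one
        _ = 1 := one_mul 1
  have hEsqdiff : ∫ ω, (Y0 ω - Y1 ω) ^ 2 ∂P = 2 * σ2 := by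
    have hexp : ∀ ω, (Y0 ω - Y1 ω) ^ 2 = (Y0 ω) ^ 2 + (Y1 ω) ^ 2 - 2 * (Y0 ω * Y1 ω) := by
      intro ω; ring
    simp_rw [hexp]
    have ha : Integrable (fun ω => (Y0 ω) ^ 2 + (Y1 ω) ^ 2) P := (hintsq i0).add (hintsq i1)
    rw [integral_sub ha (hintmul.const_mul 2),
      integral_add (hintsq i0) (hintsq i1), integral_const_mul, hEmul, hEY1sq, hEY1, ← hμ, hvar]
    ring
  -- E|Y0 - Y1| ≥ 2 σ2
  have hintabs : Integrable (fun ω => |Y0 ω - Y1 ω|) P := by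
    refine hint _ ((hmeas i0).sub (hmeas i1)).abs fun ω => ?_
    rw [abs_abs, abs_sub_comm]
    have h0 := hrange i0 ω; have h1 := hrange i1 ω
    rw [abs_le]; constructor <;> [linarith [h1.1, h0.2]; linarith [h0.1, h1.2]]
  have habs_ge : 2 * σ2 ≤ ∫ ω, |Y0 ω - Y1 ω| ∂P := by
    rw [← hEsqdiff]
    refine integral_mono (hint _ (((hmeas i0).sub (hmeas i1)).pow_const 2) fun ω => ?_)
      hintabs fun ω => ?_
    · rw [abs_pow]
      refine pow_le_one₀ (abs_nonneg _) ?_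
      have h0 := hrange i0 ω; have h1 := hrange i1 ω
      rw [abs_le]; constructor <;> [linarith [h1.2, h0.1]; linarith [h0.2, h1.1]]
    · have hb : |Y0 ω - Y1 ω| ≤ 1 := by
        have h0 := hrange i0 ω; have h1 := hrange i1 ω
        rw [abs_le]; constructor <;> [linarith [h1.2, h0.1]; linarith [h0.2, h1.1]]
      calc (Y0 ω - Y1 ω) ^ 2 = |Y0 ω - Y1 ω| ^ 2 := by rw [sq_abs]
        _ ≤ |Y0 ω - Y1 ω| * 1 := by rw [sq]; exact mul_le_mul_of_nonneg_left hb (abs_nonneg _)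
        _ = |Y0 ω - Y1 ω| := mul_one _
  -- E[min(Y0,Y1)] = μ - E|Y0-Y1|/2
  have hmin_int : Integrable (fun ω => min (Y0 ω) (Y1 ω)) P := by
    refine hint _ ((hmeas i0).min (hmeas i1)) fun ω => ?_
    have h0 := hrange i0 ω; have h1 := hrange i1 ω
    rw [abs_le]; constructor
    · rcases min_choice (Y0 ω) (Y1 ω) with h | h <;> rw [h] <;> linarith [h0.1, h1.1]
    · exact le_trans (min_le_left _ _) h0.2
  have hEmin : ∫ ω, min (Y0 ω) (Y1 ω) ∂P
      = μ - (∫ ω, |Y0 ω - Y1 ω| ∂P) / 2 := by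
    have hexp : ∀ ω, min (Y0 ω) (Y1 ω) = (Y0 ω + Y1 ω - |Y0 ω - Y1 ω|) / 2 := by
      intro ω
      rcases le_total (Y0 ω) (Y1 ω) with h | h
      · rw [min_eq_left h, abs_of_nonpos (by linarith)]; ring
      · rw [min_eq_right h, abs_of_nonneg (by linarith)]; ring
    simp_rw [hexp]
    have ha : Integrable (fun ω => Y0 ω + Y1 ω) P := (hintX i0).add (hintX i1)
    rw [integral_div, integral_sub ha hintabs,
      integral_add (hintX i0) (hintX i1), hEY1, ← hμ]
    ring
  have hEmin_le : ∫ ω, min (Y0 ω) (Y1 ω) ∂P ≤ μ - σ2 := by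
    rw [hEmin]; linarith
  -- inf' ≤ min pointwise, and inf' ≥ 0
  set F : Ω → ℝ := fun ω => Finset.univ.inf' (Finset.univ_nonempty_iff.mpr ⟨i0⟩)
    (fun i => X i ω) with hF
  have hFle : ∀ ω, F ω ≤ min (Y0 ω) (Y1 ω) :=
    fun ω => le_min (Finset.inf'_le _ (Finset.mem_univ i0))
      (Finset.inf'_le _ (Finset.mem_univ i1))
  have hF0 : ∀ ω, 0 ≤ F ω := fun ω => Finset.le_inf' _ _ fun i _ => (hrange i ω).1
  have hFmeas : Measurable F := by
    have key : ∀ (s : Finset (Fin n)) (hs : s.Nonempty),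
        Measurable (fun ω => s.inf' hs (fun i => X i ω)) := by
      intro s hs
      induction hs using Finset.Nonempty.cons_induction with
      | singleton a => simpa using hmeas a
      | cons a s ha hs ih =>
        simp only [Finset.inf'_cons (H := hs)]
        exact (hmeas a).inf ih
    exact key _ _
  have hFint : Integrable F P := by
    refine hint _ hFmeas fun ω => ?_
    rw [abs_of_nonneg (hF0 ω)]
    exact le_trans (hFle ω) (le_trans (min_le_left _ _) (hrange i0 ω).2)
  have hmain : ∫ ω, F ω ∂P ≤ μ - σ2 := by
    refine le_trans (integral_mono hFint hmin_int hFle) hEmin_le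
  refine ⟨hmain, ?_⟩
  have : 0 ≤ ∫ ω, F ω ∂P := integral_nonneg hF0
  linarith
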